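/- Let G be a connected graph with n(G) ≥ 2 and let k ≥ 2. Then dim_ms(G ∘ \overline{K_k}) = n(G)(k−1) if and only if G is multiset distance irregular, where \overline{K_k} is the edgeless graph on k vertices. -/

import Mathlib

open SimpleGraph

/-- The multiset representation of `u` with respect to `S`: the multiset of
distances from `u` to the vertices of `S`, counted with multiplicity. -/
noncomputable def mrep {V : Type*} (G : SimpleGraph V) (u : V) (S : Finset V) : Multiset ℕ :=
  S.val.map fun w => G.dist u w

/-- `S` is an outer multiset resolving set of `G`: the multiset representations of
the vertices outside `S` are pairwise distinct. -/
def IsOMR {V : Type*} (G : SimpleGraph V) (S : Finset V) : Prop :=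
  ∀ u ∉ S, ∀ v ∉ S, mrep G u S = mrep G v S → u = v

/-- The outer multiset dimension of `G`. -/
noncomputable def dimMS {V : Type*} (G : SimpleGraph V) [Fintype V] : ℕ :=
  sInf {n | ∃ S : Finset V, S.card = n ∧ IsOMR G S}

/-- The diameter of `G`: the largest distance between vertices of `G`. -/
noncomputable def gdiam {V : Type*} (G : SimpleGraph V) [Fintype V] : ℕ :=
  Finset.univ.sup fun p : V × V => G.dist p.1 p.2

/-- The lexicographic product of two simple graphs: `(g, h)` and `(gʹ, hʹ)` are adjacent
iff `g gʹ` is an edge of `G`, or `g = gʹ` and `h hʹ` is an edge of `H`. -/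
def lexProd {α β : Type*} (G : SimpleGraph α) (H : SimpleGraph β) : SimpleGraph (α × β) where
  Adj p q := G.Adj p.1 q.1 ∨ (p.1 = q.1 ∧ H.Adj p.2 q.2)
  symm := by
    constructor
    intro p q h
    rcases h with h | ⟨h1, h2⟩
    · exact Or.inl h.symm
    · exact Or.inr ⟨h1.symm, h2.symm⟩
  loopless := by
    constructor
    intro p h
    rcases h with h | ⟨_, h2⟩
    · exact G.irrefl h
    · exact H.irrefl h2


/-- `G` is multiset distance irregular if distinct vertices have different multiset
representations with respect to the whole vertex set. -/
def MultisetDistIrregular {V : Type*} (G : SimpleGraph V) [Fintype V] : Prop :=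
  ∀ u v : V, u ≠ v → mrep G u Finset.univ ≠ mrep G v Finset.univ


open scoped Classical in
noncomputable def auxmap {V : Type*} [Fintype V] (G : SimpleGraph V) (g : V) : Multiset ℕ :=
  Finset.univ.val.map fun g₂ => if g₂ = g then 2 else G.dist g g₂

lemma auxmap_add {V : Type*} [Fintype V] (G : SimpleGraph V) (g : V) :
    mrep G g Finset.univ + {2} = auxmap G g + {0} := by
  classical
  have hg : g ∈ (Finset.univ : Finset V) := Finset.mem_univ g
  have hval : (Finset.univ : Finset V).val = g ::ₘ (Finset.univ.erase g).val := by
    conv_lhs => rw [← Finset.insert_erase hg]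
    rw [Finset.insert_val_of_notMem (Finset.notMem_erase g _)]
  have hrest : ((Finset.univ.erase g).val.map fun g₂ => G.dist g g₂)
      = ((Finset.univ.erase g).val.map fun g₂ => if g₂ = g then 2 else G.dist g g₂) := by
    apply Multiset.map_congr rfl
    intro g₂ hg₂
    have : g₂ ≠ g := Finset.ne_of_mem_erase (Finset.mem_val.mp hg₂)
    simp [this]
  unfold mrep auxmap
  rw [hval, Multiset.map_cons, Multiset.map_cons, SimpleGraph.dist_self, if_pos rfl,
    add_comm _ ({2} : Multiset ℕ), add_comm _ ({0} : Multiset ℕ),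
    Multiset.singleton_add, Multiset.singleton_add, hrest]
  exact Multiset.cons_swap _ _ _

lemma auxmap_eq_iff {V : Type*} [Fintype V] (G : SimpleGraph V) (u v : V) :
    auxmap G u = auxmap G v ↔ mrep G u Finset.univ = mrep G v Finset.univ := by
  constructor
  · intro h
    have := (auxmap_add G u).trans (by rw [h, ← auxmap_add G v])
    exact add_right_cancel this
  · intro h
    have := (auxmap_add G u).symm.trans (by rw [h, auxmap_add G v])
    exact add_right_cancel this

lemma card_ne_fin {k : ℕ} (a : Fin k) :
    (Finset.univ.filter fun h : Fin k => h ≠ a).card = k - 1 := by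
  simp [Finset.filter_ne', Finset.card_erase_of_mem]

lemma lexProj_dist_le {α β : Type*} {G : SimpleGraph α} {H : SimpleGraph β}
    (hconn : G.Connected) :
    ∀ {p q : α × β} (w : (lexProd G H).Walk p q), G.dist p.1 q.1 ≤ w.length := by
  intro p q w
  induction w with
  | nil => simp
  | @cons u v x hadj w ih =>
    rcases hadj with hadj | ⟨heq, _⟩
    · calc G.dist u.1 x.1 ≤ G.dist u.1 v.1 + G.dist v.1 x.1 := hconn.dist_triangle
        _ ≤ 1 + w.length := by
            have h1 : G.dist u.1 v.1 ≤ 1 := by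
              simpa using SimpleGraph.dist_le hadj.toWalk
            omega
        _ = (SimpleGraph.Walk.cons _ w).length := by show 1 + w.length = w.length + 1; omega
    · have h0 : G.dist u.1 v.1 = 0 := by rw [heq]; exact SimpleGraph.dist_self
      calc G.dist u.1 x.1 ≤ G.dist u.1 v.1 + G.dist v.1 x.1 := hconn.dist_triangle
        _ ≤ w.length := by omega
        _ ≤ _ := by show w.length ≤ w.length + 1; omega

lemma lexProd_dist_of_ne {α β : Type*} {G : SimpleGraph α} {H : SimpleGraph β}
    (hconn : G.Connected) {g g' : α} (hgg : g ≠ g') (h h' : β) :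
    (lexProd G H).dist (g, h) (g', h') = G.dist g g' := by
  obtain ⟨p, hp⟩ := (hconn g g').exists_walk_length_eq_dist
  cases p with
  | nil => exact absurd rfl hgg
  | @cons _ a _ hadj q =>
    let f : G →g lexProd G H := ⟨fun b => (b, h'), fun hab => Or.inl hab⟩
    let w : (lexProd G H).Walk (g, h) (g', h') :=
      SimpleGraph.Walk.cons (Or.inl hadj : (lexProd G H).Adj (g, h) (a, h')) (q.map f)
    have hwlen : w.length = G.dist g g' := by
      show (q.map f).length + 1 = G.dist g g'
      simpa [w, SimpleGraph.Walk.length_cons, SimpleGraph.Walk.length_map] using hp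
    refine le_antisymm ?_ ?_
    · calc (lexProd G H).dist (g, h) (g', h') ≤ w.length := SimpleGraph.dist_le w
        _ = _ := hwlen
    · obtain ⟨w₂, hw₂⟩ := SimpleGraph.Reachable.exists_walk_length_eq_dist ⟨w⟩
      calc G.dist g g' ≤ w₂.length := lexProj_dist_le hconn w₂
        _ = _ := hw₂

lemma lexProd_dist_same {V : Type*} [Fintype V] {G : SimpleGraph V} {k : ℕ}
    (hconn : G.Connected) (hn : 2 ≤ Fintype.card V) {g : V} {h h' : Fin k} (hhh : h ≠ h') :
    (lexProd G (⊥ : SimpleGraph (Fin k))).dist (g, h) (g, h') = 2 := by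
  obtain ⟨g'', hg''⟩ := Fintype.exists_ne_of_one_lt_card (by omega) g
  obtain ⟨a, hga⟩ : ∃ a, G.Adj g a := by
    obtain ⟨p, hp⟩ := (hconn g g'').exists_walk_length_eq_dist
    cases p with
    | nil => exact absurd rfl (Ne.symm hg'')
    | cons hadj q => exact ⟨_, hadj⟩
  let w : (lexProd G (⊥ : SimpleGraph (Fin k))).Walk (g, h) (g, h') :=
    SimpleGraph.Walk.cons (Or.inl hga : (lexProd G ⊥).Adj (g, h) (a, h))
      (SimpleGraph.Walk.cons (Or.inl hga.symm : (lexProd G ⊥).Adj (a, h) (g, h')) .nil)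
  have hle : (lexProd G ⊥).dist (g, h) (g, h') ≤ 2 := by
    exact SimpleGraph.dist_le w
  have hne0 : (lexProd G ⊥).dist (g, h) (g, h') ≠ 0 := by
    intro h0
    have := (SimpleGraph.Reachable.dist_eq_zero_iff ⟨w⟩).mp h0
    exact hhh (congrArg Prod.snd this)
  have hne1 : (lexProd G ⊥).dist (g, h) (g, h') ≠ 1 := by
    intro h1
    rcases SimpleGraph.dist_eq_one_iff_adj.mp h1 with hc | ⟨-, hc⟩
    · exact G.irrefl hc
    · exact hc.elim
  omega

lemma mrep_lex_count {V : Type*} [Fintype V] {G : SimpleGraph V} {k : ℕ}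
    (hconn : G.Connected) (hn : 2 ≤ Fintype.card V)
    (t : V → Fin k) (S : Finset (V × Fin k))
    (hS : ∀ p : V × Fin k, p ∈ S ↔ p.2 ≠ t p.1) (g : V) (x : ℕ) :
    Multiset.count x (mrep (lexProd G (⊥ : SimpleGraph (Fin k))) (g, t g) S)
      = (k - 1) * Multiset.count x (auxmap G g) := by
  classical
  have hf : ∀ p ∈ S, (lexProd G (⊥ : SimpleGraph (Fin k))).dist (g, t g) p
      = (if p.1 = g then 2 else G.dist g p.1) := by
    rintro ⟨g₂, h₂⟩ hp
    by_cases hgg : g₂ = g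
    · subst hgg
      have hne : t g₂ ≠ h₂ := fun h => ((hS _).mp hp) h.symm
      rw [if_pos rfl]
      exact lexProd_dist_same hconn hn hne
    · rw [if_neg hgg]
      exact lexProd_dist_of_ne hconn (Ne.symm hgg) _ _
  unfold mrep
  rw [Multiset.count_map]
  have h1 : (S.val.filter fun a => x = (lexProd G (⊥ : SimpleGraph (Fin k))).dist (g, t g) a)
      = S.val.filter fun a => x = (if a.1 = g then 2 else G.dist g a.1) := by
    apply Multiset.filter_congr
    intro p hp
    rw [hf p (Finset.mem_val.mp hp)]
  rw [h1]
  have h2 : Multiset.card (S.val.filter fun a => x = (if a.1 = g then 2 else G.dist g a.1))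
      = (S.filter fun a => x = (if a.1 = g then 2 else G.dist g a.1)).card := rfl
  rw [h2]
  have h3 : (S.filter fun a => x = (if a.1 = g then 2 else G.dist g a.1))
      = Finset.univ.filter fun p : V × Fin k =>
          (x = (if p.1 = g then 2 else G.dist g p.1)) ∧ p.2 ≠ t p.1 := by
    ext p
    simp [hS p, and_comm]
  rw [h3, Finset.card_filter, Fintype.sum_prod_type]
  have h4 : ∀ g₂ : V, (∑ h₂ : Fin k,
      if (x = (if g₂ = g then 2 else G.dist g g₂)) ∧ h₂ ≠ t g₂ then 1 else 0)
      = if x = (if g₂ = g then 2 else G.dist g g₂) then k - 1 else 0 := by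
    intro g₂
    by_cases hx : x = (if g₂ = g then 2 else G.dist g g₂)
    · simp only [hx, true_and, if_pos]
      rw [← Finset.card_filter]
      exact card_ne_fin (t g₂)
    · simp [hx]
  simp only [h4]
  have h5 : Multiset.count x (auxmap G g)
      = (Finset.univ.filter fun g₂ : V => x = (if g₂ = g then 2 else G.dist g g₂)).card := by
    unfold auxmap
    rw [Multiset.count_map]
    rfl
  rw [h5, Finset.card_filter, Finset.mul_sum]
  apply Finset.sum_congr rfl
  intro g₂ _
  by_cases hx : x = (if g₂ = g then 2 else G.dist g g₂) <;> simp [hx]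

lemma omr_fst_eq {V : Type*} [Fintype V] {G : SimpleGraph V} {k : ℕ}
    (hconn : G.Connected) (hn : 2 ≤ Fintype.card V) {S : Finset (V × Fin k)}
    (hOMR : IsOMR (lexProd G (⊥ : SimpleGraph (Fin k))) S) :
    ∀ p ∉ S, ∀ q ∉ S, p.1 = q.1 → p = q := by
  rintro ⟨pa, pb⟩ hp ⟨qa, qb⟩ hq h1
  dsimp only at h1
  subst h1
  apply hOMR _ hp _ hq
  unfold mrep
  apply Multiset.map_congr rfl
  rintro ⟨g₂, h₂⟩ hw
  have hwS : (g₂, h₂) ∈ S := Finset.mem_val.mp hw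
  by_cases hgg : g₂ = pa
  · subst hgg
    have h2 : h₂ ≠ pb := fun h => hp (h ▸ hwS)
    have h3 : h₂ ≠ qb := fun h => hq (h ▸ hwS)
    rw [lexProd_dist_same hconn hn (Ne.symm h2), lexProd_dist_same hconn hn (Ne.symm h3)]
  · rw [lexProd_dist_of_ne hconn (Ne.symm hgg), lexProd_dist_of_ne hconn (Ne.symm hgg)]

lemma omr_card_lb {V : Type*} [Fintype V] {G : SimpleGraph V} {k : ℕ}
    (hconn : G.Connected) (hn : 2 ≤ Fintype.card V) (hk : 2 ≤ k)
    {S : Finset (V × Fin k)}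
    (hOMR : IsOMR (lexProd G (⊥ : SimpleGraph (Fin k))) S) :
    Fintype.card V * (k - 1) ≤ S.card := by
  classical
  set T := (Finset.univ : Finset (V × Fin k)) \ S with hT
  have hinj : Set.InjOn Prod.fst (T : Set (V × Fin k)) := by
    intro p hp q hq h1
    exact omr_fst_eq hconn hn hOMR p (Finset.mem_sdiff.mp (Finset.mem_coe.mp hp)).2
      q (Finset.mem_sdiff.mp (Finset.mem_coe.mp hq)).2 h1
  have hTle : T.card ≤ Fintype.card V := by
    calc T.card = (T.image Prod.fst).card := (Finset.card_image_of_injOn hinj).symm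
      _ ≤ (Finset.univ : Finset V).card := Finset.card_le_univ _
      _ = Fintype.card V := Finset.card_univ
  have hTcard : T.card = Fintype.card V * k - S.card := by
    rw [hT, Finset.card_sdiff_of_subset (Finset.subset_univ S), Finset.card_univ, Fintype.card_prod,
      Fintype.card_fin]
  have hSle : S.card ≤ Fintype.card V * k := by
    calc S.card ≤ Fintype.card (V × Fin k) := Finset.card_le_univ S
      _ = Fintype.card V * k := by rw [Fintype.card_prod, Fintype.card_fin]
  have hsplit : Fintype.card V * k = Fintype.card V * (k - 1) + Fintype.card V := by
    obtain ⟨k', rfl⟩ : ∃ k', k = k' + 1 := ⟨k - 1, by omega⟩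
    simp [Nat.mul_succ]
  omega

theorem stmt_14 (V : Type*) [Fintype V] (G : SimpleGraph V)
    (hconn : G.Connected) (hn : 2 ≤ Fintype.card V) (k : ℕ) (hk : 2 ≤ k) :
    dimMS (lexProd G (⊥ : SimpleGraph (Fin k))) = Fintype.card V * (k - 1) ↔
      MultisetDistIrregular G := by
  classical
  have hne : {m | ∃ S : Finset (V × Fin k), S.card = m ∧
      IsOMR (lexProd G (⊥ : SimpleGraph (Fin k))) S}.Nonempty :=
    ⟨_, Finset.univ, rfl, fun u hu => absurd (Finset.mem_univ u) hu⟩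
  constructor
  · intro hdim
    have hmem : Fintype.card V * (k - 1) ∈ {m | ∃ S : Finset (V × Fin k), S.card = m ∧
        IsOMR (lexProd G (⊥ : SimpleGraph (Fin k))) S} :=
      hdim ▸ (Nat.sInf_mem hne)
    obtain ⟨S, hcard, hOMR⟩ := hmem
    set T := (Finset.univ : Finset (V × Fin k)) \ S with hT
    have hinj : Set.InjOn Prod.fst (T : Set (V × Fin k)) := by
      intro p hp q hq h1
      exact omr_fst_eq hconn hn hOMR p (Finset.mem_sdiff.mp (Finset.mem_coe.mp hp)).2
        q (Finset.mem_sdiff.mp (Finset.mem_coe.mp hq)).2 h1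
    have hTcard : T.card = Fintype.card V := by
      rw [hT, Finset.card_sdiff_of_subset (Finset.subset_univ S), Finset.card_univ, Fintype.card_prod,
        Fintype.card_fin, hcard]
      obtain ⟨k', rfl⟩ : ∃ k', k = k' + 1 := ⟨k - 1, by omega⟩
      simp only [Nat.add_sub_cancel, Nat.mul_succ]
      rw [Nat.add_sub_cancel_left]
    have himg : T.image Prod.fst = Finset.univ := by
      apply Finset.eq_univ_of_card
      rw [Finset.card_image_of_injOn hinj, hTcard]
    have hex : ∀ g : V, ∃ h : Fin k, (g, h) ∈ T := by
      intro g
      have hg : g ∈ T.image Prod.fst := himg ▸ Finset.mem_univ g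
      obtain ⟨p, hp, rfl⟩ := Finset.mem_image.mp hg
      exact ⟨p.2, hp⟩
    choose t ht using hex
    have hS : ∀ p : V × Fin k, p ∈ S ↔ p.2 ≠ t p.1 := by
      intro p
      constructor
      · intro hpS heq
        have h1 : (p.1, t p.1) ∈ T := ht p.1
        have hnotS := (Finset.mem_sdiff.mp h1).2
        apply hnotS
        have h2 : p = (p.1, t p.1) := Prod.ext rfl heq
        rwa [← h2]
      · intro hne2
        by_contra hpS
        have hpT : p ∈ T := Finset.mem_sdiff.mpr ⟨Finset.mem_univ _, hpS⟩
        have := omr_fst_eq hconn hn hOMR p (Finset.mem_sdiff.mp hpT).2 (p.1, t p.1)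
          (Finset.mem_sdiff.mp (ht p.1)).2 rfl
        exact hne2 (congrArg Prod.snd this)
    intro u v huv heq
    have haux : auxmap G u = auxmap G v := (auxmap_eq_iff G u v).mpr heq
    have hm : mrep (lexProd G (⊥ : SimpleGraph (Fin k))) (u, t u) S
        = mrep (lexProd G (⊥ : SimpleGraph (Fin k))) (v, t v) S := by
      apply Multiset.ext.mpr
      intro x
      rw [mrep_lex_count hconn hn t S hS u x, mrep_lex_count hconn hn t S hS v x, haux]
    have hnotu : (u, t u) ∉ S := fun h => (hS _).mp h rfl
    have hnotv : (v, t v) ∉ S := fun h => (hS _).mp h rfl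
    exact huv (congrArg Prod.fst (hOMR _ hnotu _ hnotv hm))
  · intro hMDI
    have hk0 : 0 < k := by omega
    set z : Fin k := ⟨0, hk0⟩ with hz
    set S₀ := Finset.univ.filter (fun p : V × Fin k => p.2 ≠ z) with hS₀def
    have hS₀ : ∀ p : V × Fin k, p ∈ S₀ ↔ p.2 ≠ (fun _ : V => z) p.1 := by
      intro p; simp [hS₀def]
    have hcard : S₀.card = Fintype.card V * (k - 1) := by
      have h1 : S₀ = Finset.univ ×ˢ (Finset.univ.erase z) := by
        ext ⟨a, b⟩
        simp [hS₀def]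
      rw [h1, Finset.card_product, Finset.card_univ,
        Finset.card_erase_of_mem (Finset.mem_univ _), Finset.card_univ, Fintype.card_fin]
    have hOMR : IsOMR (lexProd G (⊥ : SimpleGraph (Fin k))) S₀ := by
      rintro ⟨ua, ub⟩ hu ⟨va, vb⟩ hv heq
      have hub : ub = z := by simpa [hS₀def] using hu
      have hvb : vb = z := by simpa [hS₀def] using hv
      subst hub; subst hvb
      have haux : auxmap G ua = auxmap G va := by
        apply Multiset.ext.mpr
        intro x
        have h1 := mrep_lex_count hconn hn (fun _ : V => z) S₀ hS₀ ua x
        have h2 := mrep_lex_count hconn hn (fun _ : V => z) S₀ hS₀ va x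
        have h3 : Multiset.count x (mrep (lexProd G (⊥ : SimpleGraph (Fin k))) (ua, z) S₀)
            = Multiset.count x (mrep (lexProd G (⊥ : SimpleGraph (Fin k))) (va, z) S₀) := by
          rw [heq]
        have hkpos : 0 < k - 1 := by omega
        exact Nat.eq_of_mul_eq_mul_left hkpos (h1 ▸ h2 ▸ h3)
      have hmr := (auxmap_eq_iff G ua va).mp haux
      have huv : ua = va := by
        by_contra hne2
        exact hMDI ua va hne2 hmr
      rw [huv]
    apply le_antisymm
    · exact Nat.sInf_le ⟨S₀, hcard, hOMR⟩
    · obtain ⟨S, hc, hO⟩ := Nat.sInf_mem hne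
      calc Fintype.card V * (k - 1) ≤ S.card := omr_card_lb hconn hn hk hO
        _ = _ := hc
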